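/- For four pairwise distinct points z₁, z₂, z₃, z₄ ∈ ℂ, the cycles cross ratio of the corresponding zero radius cycles equals the squared modulus of the classical cross ratio: ⟦Z₁,Z₂;Z₃,Z₄⟧ = |(z₁,z₂;z₃,z₄)|², where (z₁,z₂;z₃,z₄) = ((z₁-z₃)/(z₁-z₄)) / ((z₂-z₃)/(z₂-z₄)). -/

import Mathlib

open Complex

/-- Cycles product of cycles with parameters `(k,l,n,m)` and `(k₁,l₁,n₁,m₁)`. -/
def cprodR (k l n m k₁ l₁ n₁ m₁ : ℝ) : ℝ :=
  k * m₁ + k₁ * m - 2 * l * l₁ - 2 * n * n₁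

/-- Cycles product of the zero radius cycles at two points of `ℂ`. -/
noncomputable def zprod (z w : ℂ) : ℝ :=
  cprodR 1 z.re z.im (‖z‖ ^ 2) 1 w.re w.im (‖w‖ ^ 2)

lemma zprod_eq (z w : ℂ) : zprod z w = ‖z - w‖ ^ 2 := by
  simp only [zprod, cprodR, ← Complex.normSq_eq_norm_sq, Complex.normSq_apply, Complex.sub_re,
    Complex.sub_im]
  ring

theorem cycles_cross_ratio_of_points (z₁ z₂ z₃ z₄ : ℂ)
    (h12 : z₁ ≠ z₂) (h13 : z₁ ≠ z₃) (h14 : z₁ ≠ z₄)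
    (h23 : z₂ ≠ z₃) (h24 : z₂ ≠ z₄) (h34 : z₃ ≠ z₄) :
    (zprod z₁ z₃ * zprod z₂ z₄) / (zprod z₁ z₄ * zprod z₂ z₃) =
      ‖((z₁ - z₃) / (z₁ - z₄)) / ((z₂ - z₃) / (z₂ - z₄))‖ ^ 2 := by
  have h1 : ‖z₁ - z₄‖ ≠ 0 := by simpa [sub_eq_zero] using h14
  have h2 : ‖z₂ - z₃‖ ≠ 0 := by simpa [sub_eq_zero] using h23
  have h3 : ‖z₂ - z₄‖ ≠ 0 := by simpa [sub_eq_zero] using h24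
  simp only [zprod_eq, map_div₀, norm_div, div_pow]
  field_simp
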